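/- There exists a number 0 < ā < 1 such that for every a with ā < a < 1, the function f is strictly increasing on (2, ∞) and satisfies f₂ < f(n) < f_∞ for all n > 2; that is, the range of f is contained in the interval (f₂, f_∞). -/

import Mathlib

/-- The reduced identifiability function of the pairwise SIR model:
`f a n = ((a^(1/n) − a^(2/n))/(a^(2/n) − a))·(n−2)`, where `a` is the final
susceptible fraction `s_∞` and `n` the average degree. -/
noncomputable def pwF (a n : ℝ) : ℝ :=
  ((a ^ ((1 : ℝ)/n) - a ^ ((2 : ℝ)/n)) / (a ^ ((2 : ℝ)/n) - a)) * (n - 2)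

/-- `f₂ = 2(a − √a)/(a·ln a)`, the limit of `f` as `n → 2⁺`. -/
noncomputable def pwFTwo (a : ℝ) : ℝ := 2 * (a - Real.sqrt a) / (a * Real.log a)

/-- `f_∞ = (ln a)/(a − 1)`, the limit of `f` as `n → ∞`. -/
noncomputable def pwFInf (a : ℝ) : ℝ := Real.log a / (a - 1)

open Real

/-- `(e^x - 1)/x`, extended by `1` at `0`. -/
noncomputable def pwPhi (x : ℝ) : ℝ := if x = 0 then 1 else (Real.exp x - 1) / x

/-- Derivative of `pwPhi` away from 0. -/
noncomputable def pwD (x : ℝ) : ℝ := ((x - 1) * Real.exp x + 1) / x ^ 2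

lemma pwPhi_of_ne {x : ℝ} (hx : x ≠ 0) : pwPhi x = (Real.exp x - 1) / x := if_neg hx

lemma pwPhi_zero : pwPhi 0 = 1 := if_pos rfl

lemma pwPhi_pos (x : ℝ) : 0 < pwPhi x := by
  rcases lt_trichotomy x 0 with h | h | h
  · rw [pwPhi_of_ne h.ne]
    exact div_pos_of_neg_of_neg (by linarith [Real.exp_lt_one_iff.mpr h]) h
  · simp [h, pwPhi_zero]
  · rw [pwPhi_of_ne h.ne']
    exact div_pos (by linarith [Real.one_lt_exp_iff.mpr h]) h

lemma hasDerivAt_pwPhi {x : ℝ} (hx : x ≠ 0) : HasDerivAt pwPhi (pwD x) x := by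
  have h1 : HasDerivAt (fun y : ℝ => (Real.exp y - 1) / y) (pwD x) x := by
    have h := ((Real.hasDerivAt_exp x).sub_const 1).div (hasDerivAt_id x) hx
    refine h.congr_deriv ?_
    unfold pwD
    simp only [id]
    field_simp
    ring
  apply h1.congr_of_eventuallyEq
  filter_upwards [isOpen_ne.mem_nhds hx] with y hy
  exact pwPhi_of_ne hy

lemma continuous_pwPhi : Continuous pwPhi := by
  rw [continuous_iff_continuousAt]
  intro x
  by_cases hx : x = 0
  · subst hx
    have h0 : Filter.Tendsto (slope Real.exp 0) (nhdsWithin 0 {(0:ℝ)}ᶜ) (nhds 1) := by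
      have := hasDerivAt_iff_tendsto_slope.mp (Real.hasDerivAt_exp 0)
      simpa using this
    have h1 : Filter.Tendsto pwPhi (nhdsWithin 0 {(0:ℝ)}ᶜ) (nhds 1) := by
      apply h0.congr'
      filter_upwards [self_mem_nhdsWithin] with y hy
      simp only [Set.mem_compl_iff, Set.mem_singleton_iff] at hy
      simp [slope_def_field, pwPhi_of_ne hy]
    rw [ContinuousAt, pwPhi_zero, ← nhdsNE_sup_pure]
    refine h1.sup ?_
    have := tendsto_pure_nhds pwPhi 0
    rwa [pwPhi_zero] at this
  · exact (hasDerivAt_pwPhi hx).differentiableAt.continuousAt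

lemma cubic_le_exp {x : ℝ} (hx : 0 ≤ x) : 1 + x + x ^ 2 / 2 + x ^ 3 / 6 ≤ Real.exp x := by
  have h := Real.sum_le_exp_of_nonneg hx 4
  rw [Finset.sum_range_succ, Finset.sum_range_succ, Finset.sum_range_succ,
    Finset.sum_range_succ, Finset.sum_range_zero] at h
  norm_num [Nat.factorial] at h
  linarith

lemma pwD_le {x : ℝ} (hx : 0 < x) : pwD x ≤ (1 + x) / 2 * pwPhi x := by
  have hT := cubic_le_exp hx.le
  have h2 : x ^ 2 + x + 2 ≤ (x ^ 2 - x + 2) * Real.exp x := by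
    nlinarith [pow_pos hx 3, pow_pos hx 4, pow_pos hx 5, sq_nonneg x]
  rw [pwPhi_of_ne hx.ne', pwD, div_le_iff₀ (by positivity)]
  have hrw : (1 + x) / 2 * ((Real.exp x - 1) / x) * x ^ 2
      = (1 + x) * (Real.exp x - 1) * x / 2 := by
    field_simp
  rw [hrw]
  nlinarith [h2]

lemma pwD_neg_identity {w : ℝ} (hw : w ≠ 0) :
    pwD (-w) * pwPhi w = (pwPhi w - pwD w) * pwPhi (-w) := by
  have hw' : -w ≠ 0 := neg_ne_zero.mpr hw
  rw [pwPhi_of_ne hw, pwPhi_of_ne hw', pwD, pwD, Real.exp_neg]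
  have hE : Real.exp w ≠ 0 := (Real.exp_pos w).ne'
  field_simp
  ring

lemma pw_key {u w : ℝ} (hu : 0 < u) (hw : 0 < w) (h : u / 2 + w < 1 / 2) :
    pwD u * pwPhi (-w) < 2 * (pwPhi u * pwD (-w)) := by
  have hid := pwD_neg_identity hw.ne'
  have hbu := pwD_le hu
  have hbw := pwD_le hw
  have hpu := pwPhi_pos u
  have hpw := pwPhi_pos w
  have hpnw := pwPhi_pos (-w)
  have h1 : pwD u * pwPhi (-w) ≤ (1 + u) / 2 * (pwPhi u * pwPhi (-w)) := by
    nlinarith [mul_le_mul_of_nonneg_right hbu hpnw.le]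
  have h2 : (1 - w) * pwPhi (-w) ≤ 2 * pwD (-w) := by
    have h3 := mul_le_mul_of_nonneg_right hbw hpnw.le
    have h4 : (1 - w) * pwPhi (-w) * pwPhi w ≤ 2 * pwD (-w) * pwPhi w := by nlinarith
    exact le_of_mul_le_mul_right h4 hpw
  have h4 : (1 + u) / 2 * (pwPhi u * pwPhi (-w)) < (1 - w) * (pwPhi u * pwPhi (-w)) := by
    apply mul_lt_mul_of_pos_right (by linarith) (mul_pos hpu hpnw)
  have h5 : (1 - w) * (pwPhi u * pwPhi (-w)) ≤ 2 * (pwPhi u * pwD (-w)) := by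
    nlinarith [mul_le_mul_of_nonneg_left h2 hpu.le]
  linarith

lemma pw_rep_alg (X a u w : ℝ) (hX : X ≠ 0) (hu : u ≠ 0) (hw : w ≠ 0)
    (hd1 : X^2 - a ≠ 0) (hd2 : X⁻¹^2 * a - 1 ≠ 0) :
    ((X - X^2) / (X^2 - a)) * (w/u) =
      ((X⁻¹ - 1)/u) / ((X⁻¹^2 * a - 1)/(-w)) := by
  have h3 : X*a*u - X^3*u ≠ 0 := by
    have h4 : X*a*u - X^3*u = -(X*u)*(X^2 - a) := by ring
    rw [h4]
    exact mul_ne_zero (neg_ne_zero.mpr (mul_ne_zero hX hu)) hd1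
  have hC : (X⁻¹^2 * a - 1) / (-w) ≠ 0 :=
    div_ne_zero hd2 (neg_ne_zero.mpr hw)
  rw [eq_div_iff hC]
  field_simp
  ring

/-- There exists `0 < ā < 1` such that for every `a` with `ā < a < 1`, the function
`f = pwF a` is strictly increasing on `(2,∞)` and satisfies `f₂ < f n < f_∞` for all
`n > 2`; in particular the range of `f` on `(2,∞)` is contained in `(f₂, f_∞)`. -/
theorem pairwise_f_monotone_and_bounded :
    ∃ abar : ℝ, 0 < abar ∧ abar < 1 ∧
      ∀ a : ℝ, abar < a → a < 1 →
        StrictMonoOn (pwF a) (Set.Ioi (2 : ℝ)) ∧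
        (∀ n : ℝ, 2 < n → pwFTwo a < pwF a n ∧ pwF a n < pwFInf a) ∧
        pwF a '' (Set.Ioi (2 : ℝ)) ⊆ Set.Ioo (pwFTwo a) (pwFInf a) := by
  refine ⟨4/5, by norm_num, by norm_num, ?_⟩
  intro a ha ha1
  have ha0 : (0:ℝ) < a := by linarith
  set t : ℝ := -Real.log a with ht
  have ht0 : 0 < t := by
    have := Real.log_neg ha0 ha1
    simp only [ht]; linarith
  have htlt : t < 1/2 := by
    have h1 : Real.exp (-(1/2:ℝ)) < a := by
      have h2 : (5:ℝ)/4 < Real.exp (1/2) := by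
        have := Real.add_one_le_exp (1/2 : ℝ)
        linarith
      rw [Real.exp_neg]
      rw [inv_lt_comm₀ (Real.exp_pos _) ha0] at *
      calc a⁻¹ ≤ (4/5:ℝ)⁻¹ := by
            rw [inv_le_inv₀ ha0 (by norm_num)]; linarith
        _ = 5/4 := by norm_num
        _ < Real.exp (1/2) := h2
    have h3 : -(1/2 : ℝ) < Real.log a := (Real.lt_log_iff_exp_lt ha0).mpr h1
    simp only [ht]; linarith
  have hae : Real.exp (-t) = a := by
    simp only [ht, neg_neg]; exact Real.exp_log ha0
  have hlog' : Real.log a = -t := by simp [ht]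
  set G : ℝ → ℝ := fun u => pwPhi u / pwPhi (2*u - t) with hG
  -- strict antitonicity of G on [0, t/2]
  have hGanti : StrictAntiOn G (Set.Icc 0 (t/2)) := by
    apply strictAntiOn_of_deriv_neg (convex_Icc _ _)
    · exact (continuous_pwPhi.div
        (continuous_pwPhi.comp ((continuous_const.mul continuous_id).sub continuous_const))
        (fun x => (pwPhi_pos _).ne')).continuousOn
    · intro x hx
      rw [interior_Icc] at hx
      obtain ⟨hx0, hx2⟩ := hx
      have hxne : x ≠ 0 := hx0.ne'
      have hvlt : 2*x - t < 0 := by linarith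
      have hvne : 2*x - t ≠ 0 := hvlt.ne
      have hinner : HasDerivAt (fun y : ℝ => 2*y - t) 2 x := by
        simpa using ((hasDerivAt_id x).const_mul 2).sub_const t
      have hd2 : HasDerivAt (fun y : ℝ => pwPhi (2*y - t)) (pwD (2*x-t) * 2) x := by
        have := (hasDerivAt_pwPhi hvne).comp x hinner
        exact this
      have hd : HasDerivAt G
          ((pwD x * pwPhi (2*x-t) - pwPhi x * (pwD (2*x-t)*2)) / (pwPhi (2*x-t))^2) x :=
        (hasDerivAt_pwPhi hxne).div hd2 (pwPhi_pos _).ne'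
      rw [hd.deriv]
      apply div_neg_of_neg_of_pos
      · have hkey := pw_key hx0 (show 0 < t - 2*x by linarith)
          (by linarith)
        have hrw : 2*x - t = -(t - 2*x) := by ring
        rw [hrw]
        linarith [hkey]
      · exact pow_pos (pwPhi_pos _) 2
  -- representation of pwF via G
  have hrep : ∀ n : ℝ, 2 < n → pwF a n = G (t/n) := by
    intro n hn
    have hn0 : (0:ℝ) < n := by linarith
    obtain ⟨u, hu⟩ : ∃ u : ℝ, u = t / n := ⟨_, rfl⟩
    have hu0 : 0 < u := hu ▸ div_pos ht0 hn0
    have hut : u < t/2 := by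
      rw [hu, div_lt_div_iff₀ hn0 (by norm_num)]
      nlinarith
    have htn : t = n * u := by rw [hu]; field_simp
    have hvne : 2*u - t ≠ 0 := by intro h; nlinarith
    have hlog : Real.log a = -t := by simp [ht]
    obtain ⟨X, hXdef⟩ : ∃ X : ℝ, X = Real.exp (-u) := ⟨_, rfl⟩
    have hX0 : 0 < X := hXdef ▸ Real.exp_pos _
    have hXlt : X < 1 := by rw [hXdef]; exact Real.exp_lt_one_iff.mpr (by linarith)
    have hXsq : X^2 = Real.exp (-(2*u)) := by
      rw [hXdef, sq, ← Real.exp_add]; congr 1; ring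
    have hX1 : a ^ ((1:ℝ)/n) = X := by
      rw [Real.rpow_def_of_pos ha0, hlog, hXdef]; congr 1; rw [htn]; field_simp
    have hX2 : a ^ ((2:ℝ)/n) = X^2 := by
      rw [Real.rpow_def_of_pos ha0, hlog, hXsq]; congr 1; rw [htn]; field_simp
    have hExpU : Real.exp u = X⁻¹ := by rw [hXdef, ← Real.exp_neg, neg_neg]
    have hE2 : Real.exp (2*u - t) = X⁻¹^2 * a := by
      rw [show 2*u - t = u + u + (-t) by ring, Real.exp_add, Real.exp_add, hae, hExpU]
      ring
    have hden1 : X^2 - a > 0 := by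
      rw [hXsq, ← hae]
      have h2 : -(2*u) > -t := by linarith
      linarith [Real.exp_lt_exp.mpr h2]
    have hden2 : X⁻¹^2 * a - 1 < 0 := by
      rw [← hE2]
      have h2 : 2*u - t < 0 := by linarith
      linarith [Real.exp_lt_one_iff.mpr h2]
    rw [pwF, hG, ← hu]
    simp only
    rw [hX1, hX2, pwPhi_of_ne hu0.ne', pwPhi_of_ne hvne, hExpU, hE2]
    rw [show n - 2 = (t - 2*u)/u by rw [htn]; field_simp,
      show 2*u - t = -(t - 2*u) by ring]
    exact pw_rep_alg X a u (t - 2*u) hX0.ne' hu0.ne' (by intro h; apply hvne; linarith)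
      hden1.ne' hden2.ne
  have hT2 : pwFTwo a = G (t/2) := by
    obtain ⟨B, hBdef⟩ : ∃ B : ℝ, B = Real.exp (-(t/2)) := ⟨_, rfl⟩
    have hB0 : 0 < B := hBdef ▸ Real.exp_pos _
    have hBa : B^2 = a := by
      rw [hBdef, sq, ← Real.exp_add, ← hae]; congr 1; ring
    have hsq : Real.sqrt a = B := by
      rw [← hBa, Real.sqrt_sq hB0.le]
    have hEB : Real.exp (t/2) = B⁻¹ := by
      rw [hBdef, ← Real.exp_neg, neg_neg]
    have h0 : 2*(t/2) - t = 0 := by ring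
    rw [pwFTwo, hG]
    simp only
    rw [h0, pwPhi_zero, pwPhi_of_ne (show t/2 ≠ 0 from (by linarith : (0:ℝ) < t/2).ne'), hEB, hsq, hlog', ← hBa]
    field_simp
    ring
  have hTI : pwFInf a = G 0 := by
    have h0 : 2*(0:ℝ) - t = -t := by ring
    rw [pwFInf, hG]
    simp only
    rw [h0, pwPhi_zero, pwPhi_of_ne (show -t ≠ 0 by intro h; nlinarith), hae, hlog']
    rw [one_div_div]
  -- memberships
  have hmem : ∀ n : ℝ, 2 < n → t/n ∈ Set.Icc 0 (t/2) := by
    intro n hn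
    have hn0 : (0:ℝ) < n := by linarith
    constructor
    · exact (div_pos ht0 hn0).le
    · rw [div_le_div_iff₀ hn0 (by norm_num)]
      nlinarith
  have h0mem : (0:ℝ) ∈ Set.Icc 0 (t/2) := ⟨le_refl _, by linarith⟩
  have h2mem : t/2 ∈ Set.Icc 0 (t/2) := ⟨by linarith, le_refl _⟩
  have hbounds : ∀ n : ℝ, 2 < n → pwFTwo a < pwF a n ∧ pwF a n < pwFInf a := by
    intro n hn
    have hn0 : (0:ℝ) < n := by linarith
    rw [hrep n hn, hT2, hTI]
    constructor
    · exact hGanti (hmem n hn) h2mem (by rw [div_lt_div_iff₀ hn0 (by norm_num)]; nlinarith)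
    · exact hGanti h0mem (hmem n hn) (div_pos ht0 hn0)
  refine ⟨?_, hbounds, ?_⟩
  · intro n hn m hm hnm
    rw [Set.mem_Ioi] at hn hm
    rw [hrep n hn, hrep m hm]
    have hn0 : (0:ℝ) < n := by linarith
    exact hGanti (hmem m hm) (hmem n hn)
      (div_lt_div_of_pos_left ht0 hn0 hnm)
  · rintro x ⟨n, hn, rfl⟩
    rw [Set.mem_Ioi] at hn
    exact ⟨(hbounds n hn).1, (hbounds n hn).2⟩
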